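/- In the dilation setting, for all p ∈ P and a ∈ A the following hold: (i) V(q)*V(p)TT*π(α_q(a))T = π(α_p(a))V(q)*V(p)T, and (ii) (T*V(p)T)(T*π(α_q(a))T) = (T*π(α_{qp}(a))T)(T*V(p)T), and both sides of (ii) equal T*π(α_{pq}(a))V(p)T. (These identities express the right covariance V₁(p)π₁(a) = π₁(α_p(a))V₁(p) of the dilated pair π₁(a) = π(a) ⊕ T*π(α_q(a))T, V₁(p) = [[V(p), V(q)*V(p)T],[0, T*V(p)T]].) -/

import Mathlib

open ContinuousLinearMap

theorem stmt_11 {A : Type*} [CStarAlgebra A]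
    {P : Type*} [CommMonoid P]
    (α : P → (A →⋆ₙₐ[ℂ] A))
    (hinj : ∀ p : P, Function.Injective (α p))
    (hcomp : ∀ (p r : P) (a : A), α p (α r a) = α (p * r) a)
    (haligned : ∀ p r : P, α p 1 * α r 1 = α r 1 * α p 1)
    (hhered : ∀ (p : P) (a : A), ∃ h : A, α p h = α p 1 * a * α p 1)
    {H L : Type*}
    [NormedAddCommGroup H] [InnerProductSpace ℂ H] [CompleteSpace H]
    [NormedAddCommGroup L] [InnerProductSpace ℂ L] [CompleteSpace L]
    (π : A →⋆ₐ[ℂ] (H →L[ℂ] H))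
    (V : P →* (H →L[ℂ] H))
    (hiso : ∀ p : P, star (V p) * V p = 1)
    (hcov : ∀ (p : P) (a : A), V p * π a = π (α p a) * V p)
    (q : P) (T : L →L[ℂ] H)
    (hT1 : adjoint T ∘L T = 1)
    (hT2 : T ∘L adjoint T = π (α q 1) - V q * star (V q)) :
    ∀ (p : P) (a : A),
      (star (V q) * V p * (T ∘L adjoint T) * π (α q a)) ∘L T =
          (π (α p a) * star (V q) * V p) ∘L T ∧
      (adjoint T ∘L (V p ∘L T)) ∘L (adjoint T ∘L (π (α q a) ∘L T)) =
          (adjoint T ∘L (π (α (q * p) a) ∘L T)) ∘L (adjoint T ∘L (V p ∘L T)) ∧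
      (adjoint T ∘L (V p ∘L T)) ∘L (adjoint T ∘L (π (α q a) ∘L T)) =
          adjoint T ∘L ((π (α (p * q) a) * V p) ∘L T) := by
  intro p a
  -- pointwise versions of hypotheses
  have pTT : ∀ y : H, T (adjoint T y) = π (α q 1) y - V q (star (V q) y) := by
    intro y
    have h := DFunLike.congr_fun hT2 y
    simpa [comp_apply, sub_apply, mul_apply] using h
  have pST : ∀ x : L, adjoint T (T x) = x := by
    intro x
    have h := DFunLike.congr_fun hT1 x
    simpa [comp_apply, one_apply] using h
  have piso : ∀ y : H, star (V q) (V q y) = y := by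
    intro y
    have h := DFunLike.congr_fun (hiso q) y
    simpa [mul_apply, one_apply] using h
  have pcov : ∀ (r : P) (b : A) (y : H), V r (π b y) = π (α r b) (V r y) := by
    intro r b y
    have h := DFunLike.congr_fun (hcov r b) y
    simpa [mul_apply] using h
  have hcovstar : ∀ (b : A), π b * star (V q) = star (V q) * π (α q b) := by
    intro b
    have h := congrArg star (hcov q (star b))
    simpa [star_mul, map_star, star_star] using h
  have pcovstar : ∀ (b : A) (y : H), star (V q) (π (α q b) y) = π b (star (V q) y) := by
    intro b y
    have h := DFunLike.congr_fun (hcovstar b) y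
    simpa [mul_apply] using h.symm
  have pabs : ∀ (b : A) (y : H), π (α q 1) (π (α q b) y) = π (α q b) y := by
    intro b y
    have h : π (α q 1) * π (α q b) = π (α q b) := by
      rw [← map_mul, ← map_mul, one_mul]
    have h2 := DFunLike.congr_fun h y
    simpa [mul_apply] using h2
  have pabs2 : ∀ (b : A) (y : H), π (α q b) (π (α q 1) y) = π (α q b) y := by
    intro b y
    have h : π (α q b) * π (α q 1) = π (α q b) := by
      rw [← map_mul, ← map_mul, mul_one]
    have h2 := DFunLike.congr_fun h y
    simpa [mul_apply] using h2
  have psVqT : ∀ x : L, star (V q) (T x) = 0 := by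
    intro x
    have h := pTT (T x)
    rw [pST x] at h
    have h2 := congrArg (fun z => star (V q) z) h
    rw [map_sub, pcovstar 1, piso] at h2
    simp only [map_one, one_apply_eq_self] at h2
    -- h2 : star (V q) (T x) = star (V q) (T x) - star (V q) (T x)
    rw [sub_self] at h2
    exact h2
  have hVqT : (star (V q)) ∘L T = 0 := by
    ext x
    simpa [comp_apply] using psVqT x
  have hTVq : (adjoint T) ∘L (V q) = 0 := by
    have h := congrArg adjoint hVqT
    rw [adjoint_comp, star_eq_adjoint, adjoint_adjoint] at h
    simpa using h
  have pTVq : ∀ y : H, adjoint T (V q y) = 0 := by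
    intro y
    have h := DFunLike.congr_fun hTVq y
    simpa [comp_apply] using h
  have hα : α p (α q a) = α q (α p a) := by
    rw [hcomp, hcomp, mul_comm]
  refine ⟨?_, ?_, ?_⟩
  · ext x
    simp only [comp_apply, mul_apply_eq_comp]
    rw [pTT (π (α q a) (T x)), pcovstar a (T x), psVqT x]
    simp only [map_zero, sub_zero]
    rw [pabs a (T x), pcov p (α q a) (T x), hα, pcovstar (α p a) (V p (T x))]
  · ext x
    simp only [comp_apply, mul_apply]
    rw [pTT (π (α q a) (T x)), pcovstar a (T x), psVqT x]
    simp only [map_zero, sub_zero]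
    rw [pabs a (T x), pcov p (α q a) (T x), hα]
    -- LHS now : adjoint T (π (α q (α p a)) (V p (T x)))
    rw [pTT (V p (T x))]
    rw [← hcomp q p a]
    rw [map_sub, map_sub]
    rw [pabs2 (α p a), ← pcov q (α p a), pTVq]
    simp only [map_zero, sub_zero]
  · ext x
    simp only [comp_apply, mul_apply_eq_comp]
    rw [pTT (π (α q a) (T x)), pcovstar a (T x), psVqT x]
    simp only [map_zero, sub_zero]
    rw [pabs a (T x), pcov p (α q a) (T x), hcomp]
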